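/- For words u, v of length at least k-1 (k ≥ 1), u ∼_k v if and only if u and v have the same prefix of length k-1, the same suffix of length k-1, and |u|_w = |v|_w for every word w of length exactly k. -/

import Mathlib

/-- Number of occurrences of `w` as a (contiguous) factor of `u`. -/
def occ {A : Type*} [DecidableEq A] (w u : List A) : ℕ :=
  ((Finset.range (u.length + 1 - w.length)).filter
    (fun i => (u.drop i).take w.length = w)).card

/-- `k`-abelian equivalence. -/
def KAbelianEq {A : Type*} [DecidableEq A] (k : ℕ) (u v : List A) : Prop :=
  ∀ w : List A, w ≠ [] → w.length ≤ k → occ w u = occ w v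

namespace KAbAux

variable {A : Type*} [DecidableEq A]

lemma occ_eq_sum (w u : List A) :
    occ w u = ∑ i ∈ Finset.range (u.length + 1 - w.length),
      (if (u.drop i).take w.length = w then 1 else 0) :=
  Finset.card_filter _ _

lemma take_len_append (w t : List A) : (w ++ t).take w.length = w :=
  List.take_left

/-- Right-extension identity. -/
lemma occ_right (S : Finset A) (u w : List A) (hS : ∀ a ∈ u, a ∈ S)
    (hm : w.length ≤ u.length) :
    occ w u = (∑ a ∈ S, occ (w ++ [a]) u) +
      (if u.drop (u.length - w.length) = w then 1 else 0) := by
  have hrange : u.length + 1 - w.length = (u.length - w.length) + 1 := by omega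
  rw [occ_eq_sum, hrange, Finset.sum_range_succ]
  have hlast : (u.drop (u.length - w.length)).take w.length
      = u.drop (u.length - w.length) := by
    apply List.take_of_length_le
    rw [List.length_drop]; omega
  rw [hlast]
  congr 1
  have hocc : ∀ a : A, occ (w ++ [a]) u
      = ∑ i ∈ Finset.range (u.length - w.length),
          (if (u.drop i).take (w.length + 1) = w ++ [a] then 1 else 0) := by
    intro a
    rw [occ_eq_sum]
    have h1 : u.length + 1 - (w ++ [a]).length = u.length - w.length := by
      simp
    rw [h1]
    simp
  calc ∑ i ∈ Finset.range (u.length - w.length),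
        (if (u.drop i).take w.length = w then 1 else 0)
      = ∑ i ∈ Finset.range (u.length - w.length), ∑ a ∈ S,
        (if (u.drop i).take (w.length + 1) = w ++ [a] then 1 else 0) := by
        refine Finset.sum_congr rfl fun i hi => ?_
        rw [Finset.mem_range] at hi
        have him : i + w.length < u.length := by omega
        have hkey : (u.drop i).take (w.length + 1)
            = (u.drop i).take w.length ++ [u[i + w.length]'him] := by
          rw [List.take_succ]
          have h2 : (u.drop i)[w.length]? = some (u[i + w.length]'him) := by
            rw [List.getElem?_drop, List.getElem?_eq_getElem him]
          rw [h2]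
          rfl
        by_cases hp : (u.drop i).take w.length = w
        · rw [if_pos hp, hkey, hp]
          have ha : (u[i + w.length]'him) ∈ S := hS _ (List.getElem_mem him)
          have : ∀ a ∈ S, (if w ++ [u[i + w.length]'him] = w ++ [a] then (1:ℕ) else 0)
              = (if (u[i + w.length]'him) = a then (1:ℕ) else 0) := by
            intro a _
            congr 1
            simp
          rw [Finset.sum_congr rfl this, Finset.sum_ite_eq, if_pos ha]
        · rw [if_neg hp]
          symm
          apply Finset.sum_eq_zero
          intro a _
          rw [if_neg]
          intro hc
          apply hp
          have h3 := congrArg (fun l => List.take w.length l) hc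
          have h4 : min w.length (w.length + 1) = w.length := by omega
          simpa [List.take_take, h4, take_len_append] using h3
    _ = ∑ a ∈ S, occ (w ++ [a]) u := by
        rw [Finset.sum_comm]
        exact Finset.sum_congr rfl fun a _ => (hocc a).symm

/-- Left-extension identity. -/
lemma occ_left (S : Finset A) (u w : List A) (hS : ∀ a ∈ u, a ∈ S)
    (hm : w.length ≤ u.length) :
    occ w u = (∑ a ∈ S, occ (a :: w) u) +
      (if u.take w.length = w then 1 else 0) := by
  have hrange : u.length + 1 - w.length = (u.length - w.length) + 1 := by omega
  rw [occ_eq_sum, hrange, Finset.sum_range_succ']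
  simp only [List.drop_zero]
  congr 1
  have hocc : ∀ a : A, occ (a :: w) u
      = ∑ i ∈ Finset.range (u.length - w.length),
          (if (u.drop i).take (w.length + 1) = a :: w then 1 else 0) := by
    intro a
    rw [occ_eq_sum]
    have h1 : u.length + 1 - (a :: w).length = u.length - w.length := by
      simp
    rw [h1]
    simp
  calc ∑ i ∈ Finset.range (u.length - w.length),
        (if (u.drop (i + 1)).take w.length = w then 1 else 0)
      = ∑ i ∈ Finset.range (u.length - w.length), ∑ a ∈ S,
        (if (u.drop i).take (w.length + 1) = a :: w then 1 else 0) := by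
        refine Finset.sum_congr rfl fun i hi => ?_
        rw [Finset.mem_range] at hi
        have hin : i < u.length := by omega
        have hkey : (u.drop i).take (w.length + 1)
            = u[i] :: (u.drop (i + 1)).take w.length := by
          rw [List.drop_eq_getElem_cons hin]
          rfl
        by_cases hp : (u.drop (i + 1)).take w.length = w
        · rw [if_pos hp, hkey, hp]
          have ha : u[i] ∈ S := hS _ (List.getElem_mem hin)
          have : ∀ a ∈ S, (if u[i] :: w = a :: w then (1:ℕ) else 0)
              = (if u[i] = a then (1:ℕ) else 0) := by
            intro a _
            congr 1
            simp
          rw [Finset.sum_congr rfl this, Finset.sum_ite_eq, if_pos ha]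
        · rw [if_neg hp]
          symm
          apply Finset.sum_eq_zero
          intro a _
          rw [if_neg]
          rw [hkey]
          intro hc
          exact hp (List.tail_eq_of_cons_eq hc)
    _ = ∑ a ∈ S, occ (a :: w) u := by
        rw [Finset.sum_comm]
        exact Finset.sum_congr rfl fun a _ => (hocc a).symm

lemma drop_suffix_eq (u v : List A) (c m : ℕ) (hm : m ≤ c) (hcu : c ≤ u.length)
    (hcv : c ≤ v.length) (h : u.drop (u.length - c) = v.drop (v.length - c)) :
    u.drop (u.length - m) = v.drop (v.length - m) := by
  have h1 : u.drop (u.length - m) = (u.drop (u.length - c)).drop (c - m) := by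
    rw [List.drop_drop]
    congr 1
    omega
  have h2 : v.drop (v.length - m) = (v.drop (v.length - c)).drop (c - m) := by
    rw [List.drop_drop]
    congr 1
    omega
  rw [h1, h2, h]

end KAbAux

open KAbAux in
theorem kabelian_iff_prefix_suffix_and_length_k_counts {A : Type*} [DecidableEq A]
    (k : ℕ) (hk : 1 ≤ k) (u v : List A)
    (hu : k - 1 ≤ u.length) (hv : k - 1 ≤ v.length) :
    KAbelianEq k u v ↔
      u.take (k - 1) = v.take (k - 1) ∧
      u.drop (u.length - (k - 1)) = v.drop (v.length - (k - 1)) ∧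
      ∀ w : List A, w.length = k → occ w u = occ w v := by
  classical
  set S : Finset A := u.toFinset ∪ v.toFinset with hSdef
  have hSu : ∀ a ∈ u, a ∈ S := fun a ha =>
    Finset.mem_union_left _ (List.mem_toFinset.mpr ha)
  have hSv : ∀ a ∈ v, a ∈ S := fun a ha =>
    Finset.mem_union_right _ (List.mem_toFinset.mpr ha)
  constructor
  · intro h
    have hcount : ∀ w : List A, w.length = k → occ w u = occ w v := by
      intro w hw
      refine h w ?_ hw.le
      intro h0
      rw [h0] at hw
      simp at hw
      omega
    by_cases hk1 : k = 1
    · subst hk1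
      refine ⟨by simp, by simp [List.drop_length], hcount⟩
    · have hk2 : 2 ≤ k := by omega
      refine ⟨?_, ?_, hcount⟩
      · -- prefix
        set p := u.take (k - 1) with hp
        have hplen : p.length = k - 1 := by
          rw [hp, List.length_take]; omega
        have hpne : p ≠ [] := by
          intro h0; rw [h0] at hplen; simp at hplen; omega
        have e1 := occ_left S u p hSu (by omega)
        have e2 := occ_left S v p hSv (by omega)
        have e3 : occ p u = occ p v := h p hpne (by omega)
        have e5 : (∑ a ∈ S, occ (a :: p) u) = ∑ a ∈ S, occ (a :: p) v :=
          Finset.sum_congr rfl fun a _ =>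
            h (a :: p) (List.cons_ne_nil _ _) (by simp [hplen]; omega)
        have e6 : (if u.take p.length = p then (1:ℕ) else 0)
            = (if v.take p.length = p then (1:ℕ) else 0) := by
          have h12 : (∑ a ∈ S, occ (a :: p) u) + (if u.take p.length = p then (1:ℕ) else 0)
              = (∑ a ∈ S, occ (a :: p) u) + (if v.take p.length = p then (1:ℕ) else 0) := by
            rw [← e1, e3, e2, e5]
          exact Nat.add_left_cancel h12
        rw [hplen, if_pos hp.symm] at e6
        by_cases hc : v.take (k - 1) = p
        · rw [hc, hp]
        · rw [if_neg hc] at e6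
          omega
      · -- suffix
        set p := u.drop (u.length - (k - 1)) with hp
        have hplen : p.length = k - 1 := by
          rw [hp, List.length_drop]; omega
        have hpne : p ≠ [] := by
          intro h0; rw [h0] at hplen; simp at hplen; omega
        have e1 := occ_right S u p hSu (by omega)
        have e2 := occ_right S v p hSv (by omega)
        have e3 : occ p u = occ p v := h p hpne (by omega)
        have e5 : (∑ a ∈ S, occ (p ++ [a]) u) = ∑ a ∈ S, occ (p ++ [a]) v :=
          Finset.sum_congr rfl fun a _ =>
            h (p ++ [a]) (by simp) (by simp [hplen]; omega)
        have e6 : (if u.drop (u.length - p.length) = p then (1:ℕ) else 0)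
            = (if v.drop (v.length - p.length) = p then (1:ℕ) else 0) := by
          have h12 : (∑ a ∈ S, occ (p ++ [a]) u)
                + (if u.drop (u.length - p.length) = p then (1:ℕ) else 0)
              = (∑ a ∈ S, occ (p ++ [a]) u)
                + (if v.drop (v.length - p.length) = p then (1:ℕ) else 0) := by
            rw [← e1, e3, e2, e5]
          exact Nat.add_left_cancel h12
        rw [hplen, if_pos hp.symm] at e6
        by_cases hc : v.drop (v.length - (k - 1)) = p
        · rw [hc, hp]
        · rw [if_neg hc] at e6
          omega
  · rintro ⟨h1, h2, h3⟩
    have claim : ∀ j, ∀ w : List A, w ≠ [] → w.length + j = k → occ w u = occ w v := by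
      intro j
      induction j with
      | zero => exact fun w _ hlen => h3 w (by omega)
      | succ j ih =>
        intro w hne hlen
        have hmu : w.length ≤ u.length := by omega
        have hmv : w.length ≤ v.length := by omega
        rw [occ_right S u w hSu hmu, occ_right S v w hSv hmv]
        have hsum : ∀ a ∈ S, occ (w ++ [a]) u = occ (w ++ [a]) v := fun a _ =>
          ih (w ++ [a]) (by simp) (by simp; omega)
        rw [Finset.sum_congr rfl hsum]
        have hdrop : u.drop (u.length - w.length) = v.drop (v.length - w.length) :=
          drop_suffix_eq u v (k - 1) w.length (by omega) hu hv h2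
        rw [hdrop]
    intro w hwne hwk
    exact claim (k - w.length) w hwne (by omega)
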